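/- Let ω be a radial weight. Then ω belongs to the class D = D̂ ∩ Ď if and only if there exist constants C ≥ 1 and 0 < α ≤ β such that C⁻¹·((1−r)/(1−t))^α·ω̂(t) ≤ ω̂(r) ≤ C·((1−r)/(1−t))^β·ω̂(t) for all 0 ≤ r ≤ t < 1. -/

import Mathlib

open MeasureTheory Complex Filter Topology
open scoped ENNReal NNReal

noncomputable section

/-- The normalized area measure `dA = dxdy/π` on `ℂ`. -/
def dA : Measure ℂ := (ENNReal.ofReal (1 / Real.pi)) • volume

/-- The open unit disc `𝔻` in `ℂ`. -/
def unitDisc : Set ℂ := Metric.ball (0 : ℂ) 1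

/-- `ω̂(r) = ∫_r^1 ω(s) ds` for a radial weight `ω`. -/
def wHat (ω : ℂ → ℝ) (r : ℝ) : ℝ := ∫ s in r..(1 : ℝ), ω ((s : ℝ) : ℂ)

/-- `ω(E) = ∫_E ω dA`. -/
def wInt (ω : ℂ → ℝ) (E : Set ℂ) : ℝ := ∫ z in E, ω z ∂dA

/-- A radial weight: nonnegative, radial, integrable on `𝔻`, with `ω̂ > 0` on `[0,1)`. -/
def RadialWeight (ω : ℂ → ℝ) : Prop :=
  (∀ z, 0 ≤ ω z) ∧ (∀ z : ℂ, ω z = ω ((‖z‖ : ℝ) : ℂ)) ∧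
  MeasureTheory.IntegrableOn ω unitDisc dA ∧
  (∀ r : ℝ, 0 ≤ r → r < 1 → 0 < wHat ω r)

/-- The class `D̂` of upper doubling radial weights. -/
def memDhat (ω : ℂ → ℝ) : Prop :=
  ∃ C : ℝ, 1 ≤ C ∧ ∀ r : ℝ, 0 ≤ r → r < 1 → wHat ω r ≤ C * wHat ω ((1 + r) / 2)

/-- The class `Ď`. -/
def memDcheck (ω : ℂ → ℝ) : Prop :=
  ∃ K C : ℝ, 1 < K ∧ 1 < C ∧ ∀ r : ℝ, 0 ≤ r → r < 1 →
    C * wHat ω (1 - (1 - r) / K) ≤ wHat ω r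

/-- The class `D = D̂ ∩ Ď`. -/
def memD (ω : ℂ → ℝ) : Prop := memDhat ω ∧ memDcheck ω

/-- The class `R` of regular weights: `ω ∈ D` and `ω̂(r) ≍ ω(r)(1-r)`. -/
def memR (ω : ℂ → ℝ) : Prop :=
  memD ω ∧ ∃ C : ℝ, 1 ≤ C ∧ ∀ r : ℝ, 0 ≤ r → r < 1 →
    C⁻¹ * (ω ((r : ℝ) : ℂ) * (1 - r)) ≤ wHat ω r ∧
    wHat ω r ≤ C * (ω ((r : ℝ) : ℂ) * (1 - r))

/-- Pseudohyperbolic distance `ρ(z,w)`. -/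
def pseudoDist (z w : ℂ) : ℝ := ‖(z - w) / (1 - (starRingEnd ℂ) z * w)‖

/-- The Bergman metric `β(z,w)`. -/
def bergmanDist (z w : ℂ) : ℝ :=
  (1 / 2) * Real.log ((1 + pseudoDist z w) / (1 - pseudoDist z w))

/-- Bergman disc `D(z,r)`. -/
def bergmanDisc (z : ℂ) (r : ℝ) : Set ℂ := {w ∈ unitDisc | bergmanDist z w < r}

/-- Pseudohyperbolic disc `Δ(a,r)`. -/
def pseudoDisc (a : ℂ) (r : ℝ) : Set ℂ := {z ∈ unitDisc | pseudoDist z a < r}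

/-- The Bergman reproducing kernel of `A_ω^2`:
`B_z^ω(ζ) = ∑ (ζ z̄)^n / (2∫_0^1 s^{2n+1} ω(s) ds)`. -/
def bergmanKernel (ω : ℂ → ℝ) (z ζ : ℂ) : ℂ :=
  ∑' n : ℕ, (ζ * (starRingEnd ℂ) z) ^ n /
    (((2 * ∫ s in (0:ℝ)..1, s ^ (2 * n + 1) * ω ((s : ℝ) : ℂ) : ℝ) : ℂ))

/-- The Bergman projection `P_ω`. -/
def bergmanProj (ω : ℂ → ℝ) (f : ℂ → ℂ) (z : ℂ) : ℂ :=
  ∫ ζ in unitDisc, f ζ * (starRingEnd ℂ) (bergmanKernel ω z ζ) * ((ω ζ : ℝ) : ℂ) ∂dA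

/-- The Hankel operator `H_f^ω(g) = fg - P_ω(fg)`. -/
def hankelOp (ω : ℂ → ℝ) (f g : ℂ → ℂ) : ℂ → ℂ :=
  fun z => f z * g z - bergmanProj ω (fun ζ => f ζ * g ζ) z

/-- The norm `‖f‖_{L_v^p} = (∫_𝔻 |f|^p v dA)^{1/p}`, valued in `ℝ≥0∞`. -/
def LpNormW (p : ℝ) (v : ℂ → ℝ) (f : ℂ → ℂ) : ℝ≥0∞ :=
  (∫⁻ z in unitDisc, ENNReal.ofReal (‖f z‖ ^ p * v z) ∂dA) ^ (1 / p)

/-- The same norm for real-valued functions. -/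
def LpNormWR (p : ℝ) (v : ℂ → ℝ) (F : ℂ → ℝ) : ℝ≥0∞ :=
  (∫⁻ z in unitDisc, ENNReal.ofReal (|F z| ^ p * v z) ∂dA) ^ (1 / p)

/-- Membership in `L_v^p`. -/
def MemLw (p : ℝ) (v : ℂ → ℝ) (f : ℂ → ℂ) : Prop :=
  AEStronglyMeasurable f (dA.restrict unitDisc) ∧ LpNormW p v f < ⊤

/-- Membership in the Bergman space `A_v^p`. -/
def MemA (p : ℝ) (v : ℂ → ℝ) (f : ℂ → ℂ) : Prop :=
  DifferentiableOn ℂ f unitDisc ∧ LpNormW p v f < ⊤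

/-- Bounded holomorphic functions on `𝔻`. -/
def MemHinf (g : ℂ → ℂ) : Prop :=
  DifferentiableOn ℂ g unitDisc ∧ ∃ M : ℝ, ∀ z ∈ unitDisc, ‖g z‖ ≤ M

/-- The Wirtinger derivative `∂̄f`. -/
def dbar (f : ℂ → ℂ) (z : ℂ) : ℂ :=
  (fderiv ℝ f z 1 + Complex.I * fderiv ℝ f z Complex.I) / 2

/-- The distance-to-analytic function
`G_{q,r}(f)(z) = inf { ((1/|D(z,r)|)∫_{D(z,r)} |f-h|^q dA)^{1/q} : h ∈ H(D(z,r)) }`. -/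
def Gqr (q r : ℝ) (f : ℂ → ℂ) (z : ℂ) : ℝ :=
  sInf {t : ℝ | ∃ h : ℂ → ℂ, DifferentiableOn ℂ h (bergmanDisc z r) ∧
    t = (((dA (bergmanDisc z r)).toReal)⁻¹ *
      ∫ w in bergmanDisc z r, ‖f w - h w‖ ^ q ∂dA) ^ (1 / q)}

/-- The average `M_r(φ)(z) = (1/|D(z,r)|)∫_{D(z,r)} φ dA`. -/
def Mavg (r : ℝ) (φ : ℂ → ℝ) (z : ℂ) : ℝ :=
  ((dA (bergmanDisc z r)).toReal)⁻¹ * ∫ w in bergmanDisc z r, φ w ∂dA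

/-- `[ω](z) = ω̂(z)(1-|z|)`. -/
def brk (ω : ℂ → ℝ) (z : ℂ) : ℝ := wHat ω ‖z‖ * (1 - ‖z‖)

/-- `σ = (ω / v^{1/p})^{p'}` with `p' = p/(p-1)`. -/
def sigmaW (p : ℝ) (ω v : ℂ → ℝ) : ℂ → ℝ :=
  fun z => (ω z / (v z) ^ (1 / p)) ^ (p / (p - 1))

/-- `A_p(ω,v) = sup_{0≤r<1} v̂(r)^{1/p} σ̂(r)^{1/p'} / ω̂(r) < ∞`. -/
def ApFin (p : ℝ) (ω v : ℂ → ℝ) : Prop :=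
  ∃ C : ℝ, 0 < C ∧ ∀ r : ℝ, 0 ≤ r → r < 1 →
    (wHat v r) ^ (1 / p) * (wHat (sigmaW p ω v) r) ^ (1 - 1 / p) ≤ C * wHat ω r

/-- An `r`-lattice in the Bergman metric. -/
def IsLattice (r : ℝ) (zs : ℕ → ℂ) : Prop :=
  (∀ j, zs j ∈ unitDisc) ∧ (unitDisc ⊆ ⋃ j, bergmanDisc (zs j) r) ∧
  ∀ i j, i ≠ j → r / 2 ≤ bergmanDist (zs i) (zs j)

/-- The filter `|z| → 1⁻` inside `𝔻`. -/
def toBdry : Filter ℂ :=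
  (Filter.comap (fun z : ℂ => ‖z‖) (nhdsWithin 1 (Set.Iio 1))) ⊓
    Filter.principal unitDisc

/-- `μ` is a `q`-Carleson measure for `A_ω^p`: the embedding `A_ω^p ↪ L^q(μ)` is bounded. -/
def IsCarleson (p q : ℝ) (ω : ℂ → ℝ) (μ : Measure ℂ) : Prop :=
  ∃ C : ℝ, 0 < C ∧ ∀ f : ℂ → ℂ, MemA p ω f →
    (∫⁻ z in unitDisc, ENNReal.ofReal (‖f z‖ ^ q) ∂μ) ≤
      ENNReal.ofReal C * (LpNormW p ω f) ^ q

/-- `μ` is a vanishing `q`-Carleson measure for `A_ω^p`. -/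
def IsVanishingCarleson (p q : ℝ) (ω : ℂ → ℝ) (μ : Measure ℂ) : Prop :=
  ∀ g : ℕ → ℂ → ℂ,
    (∀ n, MemA p ω (g n) ∧ LpNormW p ω (g n) ≤ 1) →
    (∀ K : Set ℂ, K ⊆ unitDisc → IsCompact K →
      TendstoUniformlyOn g (fun _ => (0 : ℂ)) Filter.atTop K) →
    Filter.Tendsto
      (fun n => ∫⁻ z in unitDisc, ENNReal.ofReal (‖g n z‖ ^ q) ∂μ)
      Filter.atTop (nhds 0)

/-- `‖Id‖^q_{A_ω^p → L^q(μ)}`: the least admissible constant. -/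
def idNormPowQ (p q : ℝ) (ω : ℂ → ℝ) (μ : Measure ℂ) : ℝ≥0∞ :=
  sInf {c : ℝ≥0∞ | ∀ f : ℂ → ℂ, MemA p ω f →
    (∫⁻ z in unitDisc, ENNReal.ofReal (‖f z‖ ^ q) ∂μ) ≤ c * (LpNormW p ω f) ^ q}

/-- `sup_{z∈𝔻} μ(D(z,r))/ω(D(z,r))^s`. -/
def carlesonSup (μ : Measure ℂ) (ω : ℂ → ℝ) (s r : ℝ) : ℝ≥0∞ :=
  ⨆ z ∈ unitDisc, μ (bergmanDisc z r) / ENNReal.ofReal ((wInt ω (bergmanDisc z r)) ^ s)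

/-- `H_f^ω : A_v^p → L_η^q` is bounded with constant `C`. -/
def HankelBddWith (ω v η : ℂ → ℝ) (p q : ℝ) (f : ℂ → ℂ) (C : ℝ) : Prop :=
  ∀ g : ℂ → ℂ, MemHinf g →
    LpNormW q η (hankelOp ω f g) ≤ ENNReal.ofReal C * LpNormW p v g

/-- `H_f^ω : A_v^p → L_η^q` is bounded. -/
def HankelBdd (ω v η : ℂ → ℝ) (p q : ℝ) (f : ℂ → ℂ) : Prop :=
  ∃ C : ℝ, 0 < C ∧ HankelBddWith ω v η p q f C

/-- `H_f^ω : A_v^p → L_η^q` is compact. -/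
def HankelCompact (ω v η : ℂ → ℝ) (p q : ℝ) (f : ℂ → ℂ) : Prop :=
  HankelBdd ω v η p q f ∧
  ∀ g : ℕ → ℂ → ℂ,
    (∀ n, MemHinf (g n) ∧ LpNormW p v (g n) ≤ 1) →
    (∀ K : Set ℂ, K ⊆ unitDisc → IsCompact K →
      TendstoUniformlyOn g (fun _ => (0 : ℂ)) Filter.atTop K) →
    Filter.Tendsto (fun n => LpNormW q η (hankelOp ω f (g n))) Filter.atTop (nhds 0)

end
section Aux

variable {ω : ℂ → ℝ}

lemma wHat_intervalIntegrable (hω : RadialWeight ω) :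
    IntervalIntegrable (fun s : ℝ => ω ((s : ℝ) : ℂ)) MeasureTheory.volume 0 1 := by
  by_contra h
  have h0 := hω.2.2.2 0 le_rfl one_pos
  rw [wHat, intervalIntegral.integral_undef h] at h0
  exact lt_irrefl 0 h0

lemma wHat_anti (hω : RadialWeight ω) {r t : ℝ} (hr : 0 ≤ r) (hrt : r ≤ t) (ht : t ≤ 1) :
    wHat ω t ≤ wHat ω r := by
  have hint := wHat_intervalIntegrable hω
  have hsub1 : Set.uIcc r t ⊆ Set.uIcc (0:ℝ) 1 := by
    rw [Set.uIcc_of_le hrt, Set.uIcc_of_le (by norm_num : (0:ℝ) ≤ 1)]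
    exact Set.Icc_subset_Icc hr ht
  have hsub2 : Set.uIcc t 1 ⊆ Set.uIcc (0:ℝ) 1 := by
    rw [Set.uIcc_of_le ht, Set.uIcc_of_le (by norm_num : (0:ℝ) ≤ 1)]
    exact Set.Icc_subset_Icc (le_trans hr hrt) le_rfl
  have h1 : IntervalIntegrable (fun s : ℝ => ω ((s : ℝ) : ℂ)) MeasureTheory.volume r t :=
    hint.mono_set hsub1
  have h2 : IntervalIntegrable (fun s : ℝ => ω ((s : ℝ) : ℂ)) MeasureTheory.volume t 1 :=
    hint.mono_set hsub2
  have hadd := intervalIntegral.integral_add_adjacent_intervals h1 h2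
  have hpos : 0 ≤ ∫ s in r..t, ω ((s : ℝ) : ℂ) :=
    intervalIntegral.integral_nonneg hrt (fun u _ => hω.1 _)
  unfold wHat
  linarith [hadd]

lemma iter_upper (C : ℝ) (hC : 0 ≤ C)
    (h : ∀ r : ℝ, 0 ≤ r → r < 1 → wHat ω r ≤ C * wHat ω (1 - (1 - r) / 2)) :
    ∀ n : ℕ, ∀ r : ℝ, 0 ≤ r → r < 1 →
      wHat ω r ≤ C ^ n * wHat ω (1 - (1 - r) / 2 ^ n) := by
  intro n
  induction n with
  | zero => intro r h0 h1; simp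
  | succ n ih =>
    intro r h0 h1
    have hr1 : (0:ℝ) ≤ 1 - (1 - r) / 2 := by linarith
    have hr1' : 1 - (1 - r) / 2 < 1 := by linarith
    have hpt : 1 - (1 - (1 - (1 - r) / 2)) / 2 ^ n = 1 - (1 - r) / 2 ^ (n + 1) := by
      have h2n : (2:ℝ) ^ n ≠ 0 := by positivity
      field_simp
      ring
    calc wHat ω r ≤ C * wHat ω (1 - (1 - r) / 2) := h r h0 h1
      _ ≤ C * (C ^ n * wHat ω (1 - (1 - (1 - (1 - r) / 2)) / 2 ^ n)) :=
          mul_le_mul_of_nonneg_left (ih _ hr1 hr1') hC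
      _ = C ^ (n + 1) * wHat ω (1 - (1 - r) / 2 ^ (n + 1)) := by rw [hpt]; ring

lemma iter_lower (K C : ℝ) (hK : 1 < K) (hC : 0 ≤ C)
    (h : ∀ r : ℝ, 0 ≤ r → r < 1 → C * wHat ω (1 - (1 - r) / K) ≤ wHat ω r) :
    ∀ n : ℕ, ∀ r : ℝ, 0 ≤ r → r < 1 →
      C ^ n * wHat ω (1 - (1 - r) / K ^ n) ≤ wHat ω r := by
  intro n
  induction n with
  | zero => intro r h0 h1; simp
  | succ n ih =>
    intro r h0 h1
    have hK0 : (0:ℝ) < K := lt_trans one_pos hK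
    have hr1 : (0:ℝ) ≤ 1 - (1 - r) / K := by
      have : (1 - r) / K ≤ 1 - r := by
        apply div_le_self (by linarith) (le_of_lt hK)
      linarith
    have hr1' : 1 - (1 - r) / K < 1 := by
      have : (0:ℝ) < (1 - r) / K := div_pos (by linarith) hK0
      linarith
    have hpt : 1 - (1 - (1 - (1 - r) / K)) / K ^ n = 1 - (1 - r) / K ^ (n + 1) := by
      have hKn : (K:ℝ) ^ n ≠ 0 := by positivity
      field_simp
      ring
    calc C ^ (n + 1) * wHat ω (1 - (1 - r) / K ^ (n + 1))
        = C * (C ^ n * wHat ω (1 - (1 - (1 - (1 - r) / K)) / K ^ n)) := by rw [hpt]; ring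
      _ ≤ C * wHat ω (1 - (1 - r) / K) :=
          mul_le_mul_of_nonneg_left (ih _ hr1 hr1') hC
      _ ≤ wHat ω r := h r h0 h1

end Aux

/-- `ω ∈ D` iff two-sided power-type doubling of `ω̂`. -/
theorem statement0 (ω : ℂ → ℝ) (hω : RadialWeight ω) :
    memD ω ↔
      ∃ C α β : ℝ, 1 ≤ C ∧ 0 < α ∧ α ≤ β ∧
        ∀ r t : ℝ, 0 ≤ r → r ≤ t → t < 1 →
          C⁻¹ * (((1 - r) / (1 - t)) ^ α) * wHat ω t ≤ wHat ω r ∧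
          wHat ω r ≤ C * (((1 - r) / (1 - t)) ^ β) * wHat ω t := by
  constructor
  · rintro ⟨⟨C, hC1, hCub⟩, ⟨K, C', hK, hC', hClb⟩⟩
    set C₁ := max C 2 with hC₁def
    have hC₁2 : (2:ℝ) ≤ C₁ := le_max_right _ _
    have hC₁1 : (1:ℝ) < C₁ := lt_of_lt_of_le one_lt_two hC₁2
    have hC₁pos : (0:ℝ) < C₁ := lt_trans one_pos hC₁1
    have hK0 : (0:ℝ) < K := lt_trans one_pos hK
    have hC'0 : (0:ℝ) < C' := lt_trans one_pos hC'
    have hub : ∀ r : ℝ, 0 ≤ r → r < 1 → wHat ω r ≤ C₁ * wHat ω (1 - (1 - r) / 2) := by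
      intro r h0 h1
      have hthis := hCub r h0 h1
      have heq : (1 + r) / 2 = 1 - (1 - r) / 2 := by ring
      rw [heq] at hthis
      have hwpos : 0 ≤ wHat ω (1 - (1 - r) / 2) :=
        (hω.2.2.2 _ (by linarith) (by linarith)).le
      calc wHat ω r ≤ C * wHat ω (1 - (1 - r) / 2) := hthis
        _ ≤ C₁ * wHat ω (1 - (1 - r) / 2) :=
            mul_le_mul_of_nonneg_right (le_max_left _ _) hwpos
    set β := Real.logb 2 C₁ with hβdef
    set α := Real.logb K C' with hαdef
    have hαpos : 0 < α := Real.logb_pos hK hC'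
    refine ⟨max C₁ C', α, max α β, le_trans hC₁1.le (le_max_left _ _), hαpos,
      le_max_left _ _, ?_⟩
    intro r t h0r hrt ht1
    have h0t : 0 ≤ t := le_trans h0r hrt
    have hr1 : r < 1 := lt_of_le_of_lt hrt ht1
    have h1t : 0 < 1 - t := by linarith
    have h1r : 0 < 1 - r := by linarith
    set x := (1 - r) / (1 - t) with hxdef
    have hxpos : 0 < x := div_pos h1r h1t
    have hx1 : 1 ≤ x := (le_div_iff₀ h1t).2 (by linarith)
    have hwt0 : 0 ≤ wHat ω t := (hω.2.2.2 t h0t ht1).le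
    have hxt : x * (1 - t) = 1 - r := by rw [hxdef]; field_simp
    constructor
    · -- lower bound
      set n := ⌊Real.logb K x⌋₊ with hndef
      have hlog0 : 0 ≤ Real.logb K x := Real.logb_nonneg hK hx1
      have hKn : (K:ℝ) ^ n ≤ x := by
        have h1 : (K:ℝ) ^ (n:ℝ) ≤ K ^ Real.logb K x :=
          Real.rpow_le_rpow_of_exponent_le hK.le (Nat.floor_le hlog0)
        rwa [Real.rpow_natCast, Real.rpow_logb hK0 (ne_of_gt hK) hxpos] at h1
      have hKn1 : (1:ℝ) ≤ K ^ n := one_le_pow₀ hK.le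
      have hKnpos : (0:ℝ) < K ^ n := by positivity
      have ht' : 1 - (1 - r) / K ^ n ≤ t := by
        have hd : 1 - t ≤ (1 - r) / K ^ n := by
          rw [le_div_iff₀ hKnpos]
          nlinarith
        linarith
      have ht'0 : 0 ≤ 1 - (1 - r) / K ^ n := by
        have hd : (1 - r) / K ^ n ≤ 1 - r := div_le_self h1r.le hKn1
        linarith
      have hmono : wHat ω t ≤ wHat ω (1 - (1 - r) / K ^ n) :=
        wHat_anti hω ht'0 ht' ht1.le
      have hiter := iter_lower K C' hK hC'0.le hClb n r h0r hr1
      have h2 : C' ^ n * wHat ω t ≤ wHat ω r :=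
        le_trans (mul_le_mul_of_nonneg_left hmono (pow_nonneg hC'0.le n)) hiter
      have hxK : x ≤ K ^ (n + 1) := by
        have hfl := Nat.lt_floor_add_one (Real.logb K x)
        have hcast : ((n:ℝ) + 1) = ((n + 1 : ℕ) : ℝ) := by push_cast; ring
        have hlt : x < K ^ ((n:ℝ) + 1) := by
          calc x = K ^ Real.logb K x := (Real.rpow_logb hK0 (ne_of_gt hK) hxpos).symm
            _ < K ^ ((n:ℝ) + 1) := Real.rpow_lt_rpow_of_exponent_lt hK (by exact_mod_cast hfl)
        rw [hcast, Real.rpow_natCast] at hlt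
        exact hlt.le
      have hkey : C'⁻¹ * x ^ α ≤ C' ^ n := by
        have h3 : x ^ α ≤ ((K:ℝ) ^ (n + 1)) ^ α :=
          Real.rpow_le_rpow hxpos.le hxK hαpos.le
        have h4 : ((K:ℝ) ^ (n + 1)) ^ α = C' ^ (n + 1) := by
          rw [← Real.rpow_natCast K (n + 1), ← Real.rpow_mul hK0.le, mul_comm,
              Real.rpow_mul hK0.le, hαdef, Real.rpow_logb hK0 (ne_of_gt hK) hC'0,
              Real.rpow_natCast]
        rw [h4, pow_succ] at h3
        calc C'⁻¹ * x ^ α ≤ C'⁻¹ * (C' ^ n * C') :=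
              mul_le_mul_of_nonneg_left h3 (by positivity)
          _ = C' ^ n := by field_simp
      calc (max C₁ C')⁻¹ * x ^ α * wHat ω t ≤ C'⁻¹ * x ^ α * wHat ω t := by
            apply mul_le_mul_of_nonneg_right _ hwt0
            apply mul_le_mul_of_nonneg_right _ (by positivity)
            exact inv_anti₀ hC'0 (le_max_right _ _)
        _ ≤ C' ^ n * wHat ω t := mul_le_mul_of_nonneg_right hkey hwt0
        _ ≤ wHat ω r := h2
    · -- upper bound
      set n := ⌈Real.logb 2 x⌉₊ with hndef
      have hlog0 : 0 ≤ Real.logb 2 x := Real.logb_nonneg one_lt_two hx1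
      have hxle : x ≤ 2 ^ n := by
        have h1 : (2:ℝ) ^ Real.logb 2 x ≤ 2 ^ (n:ℝ) :=
          Real.rpow_le_rpow_of_exponent_le one_le_two (Nat.le_ceil _)
        rwa [Real.rpow_natCast, Real.rpow_logb two_pos (by norm_num) hxpos] at h1
      have h2npos : (0:ℝ) < 2 ^ n := by positivity
      have ht' : t ≤ 1 - (1 - r) / 2 ^ n := by
        have hd : (1 - r) / 2 ^ n ≤ 1 - t := by
          rw [div_le_iff₀ h2npos]
          nlinarith
        linarith
      have ht'1 : 1 - (1 - r) / 2 ^ n ≤ 1 := by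
        have hd : 0 < (1 - r) / 2 ^ n := div_pos h1r h2npos
        linarith
      have hmono : wHat ω (1 - (1 - r) / 2 ^ n) ≤ wHat ω t :=
        wHat_anti hω h0t ht' ht'1
      have hiter := iter_upper C₁ hC₁pos.le hub n r h0r hr1
      have h2 : wHat ω r ≤ C₁ ^ n * wHat ω t :=
        le_trans hiter (mul_le_mul_of_nonneg_left hmono (by positivity))
      have hkey : C₁ ^ n ≤ C₁ * x ^ β := by
        have hceil : ((n:ℕ):ℝ) < Real.logb 2 x + 1 := Nat.ceil_lt_add_one hlog0
        have h3 : C₁ ^ ((n:ℕ):ℝ) ≤ C₁ ^ (Real.logb 2 x + 1) :=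
          Real.rpow_le_rpow_of_exponent_le hC₁1.le hceil.le
        rw [Real.rpow_natCast] at h3
        have h4 : C₁ ^ (Real.logb 2 x + 1) = C₁ * x ^ β := by
          rw [Real.rpow_add hC₁pos, Real.rpow_one]
          have h5 : C₁ ^ Real.logb 2 x = x ^ β := by
            rw [Real.rpow_def_of_pos hC₁pos, Real.rpow_def_of_pos hxpos, hβdef,
              Real.logb, Real.logb]
            congr 1
            ring
          rw [h5]; ring
        rw [h4] at h3
        exact h3
      calc wHat ω r ≤ C₁ ^ n * wHat ω t := h2
        _ ≤ C₁ * x ^ β * wHat ω t := mul_le_mul_of_nonneg_right hkey hwt0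
        _ ≤ max C₁ C' * x ^ max α β * wHat ω t := by
            apply mul_le_mul_of_nonneg_right _ hwt0
            exact mul_le_mul (le_max_left _ _)
              (Real.rpow_le_rpow_of_exponent_le hx1 (le_max_right _ _))
              (by positivity) (by positivity)
  · rintro ⟨C, α, β, hC1, hα, hαβ, h⟩
    have hC0 : (0:ℝ) < C := lt_of_lt_of_le one_pos hC1
    constructor
    · refine ⟨C * 2 ^ β, ?_, ?_⟩
      · have h2β : (1:ℝ) ≤ 2 ^ β := by
          have := Real.rpow_le_rpow_of_exponent_le one_le_two
            (by linarith : (0:ℝ) ≤ β)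
          rwa [Real.rpow_zero] at this
        nlinarith
      · intro r h0 h1
        have hmid : r ≤ (1 + r) / 2 := by linarith
        have hmid1 : (1 + r) / 2 < 1 := by linarith
        have hup := (h r ((1 + r) / 2) h0 hmid hmid1).2
        have hq : (1 - r) / (1 - (1 + r) / 2) = 2 := by
          rw [div_eq_iff (by linarith : (1:ℝ) - (1 + r) / 2 ≠ 0)]
          ring
        rw [hq] at hup
        exact hup
    · set K := (2 * C) ^ α⁻¹ with hKdef
      have h2C : (1:ℝ) < 2 * C := by linarith
      have hK1 : 1 < K := by
        rw [hKdef]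
        exact Real.one_lt_rpow_iff_of_pos (by linarith) |>.2 (Or.inl ⟨h2C, inv_pos.2 hα⟩)
      have hK0 : (0:ℝ) < K := lt_trans one_pos hK1
      refine ⟨K, 2, hK1, one_lt_two, ?_⟩
      intro r h0 h1
      set t := 1 - (1 - r) / K with htdef
      have hrt : r ≤ t := by
        have hd : (1 - r) / K ≤ 1 - r := div_le_self (by linarith) hK1.le
        rw [htdef]; linarith
      have ht1 : t < 1 := by
        have hd : 0 < (1 - r) / K := div_pos (by linarith) hK0
        rw [htdef]; linarith
      have hlow := (h r t h0 hrt ht1).1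
      have hq : (1 - r) / (1 - t) = K := by
        rw [htdef]
        have h1r : (1:ℝ) - r ≠ 0 := by intro hc; linarith [hc]
        field_simp
        rw [show K - (K - (1 - r)) = 1 - r by ring, div_self h1r]
      rw [hq] at hlow
      have hKα : K ^ α = 2 * C := by
        rw [hKdef, ← Real.rpow_mul (by linarith : (0:ℝ) ≤ 2 * C),
          inv_mul_cancel₀ (ne_of_gt hα), Real.rpow_one]
      rw [hKα] at hlow
      have heq : C⁻¹ * (2 * C) = 2 := by field_simp
      rw [heq] at hlow
      exact hlow
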